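/- arXiv:0902.3220 — 3 statements merged into one kernel-verified Lean document; each statement's English description precedes it below -/
import Mathlib

section
/- Let G ≤ Aut(X*) be a self-similar, level-transitive, regular branch group. Then there exists an integer n such that G⋉(uv) = G⋉v for all words u, v ∈ X* with |v| ≥ n. -/
open List

/-- Vertices of the regular rooted tree over alphabet `X`: finite words. -/
abbrev Vtx (X : Type*) := List X

section Tree

variable {X : Type*} [DecidableEq X]

/-- A permutation of the vertex set is a rooted-tree automorphism if it fixes the
root and maps children of a vertex to children of its image. -/
def IsTreeAut (f : Equiv.Perm (Vtx X)) : Prop :=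
  f [] = [] ∧ ∀ (w : Vtx X) (x : X), ∃ y : X, f (w ++ [x]) = f w ++ [y]

/-- The state (section) of `f` at the vertex `w`, as a function on vertices. -/
def stateFun (f : Equiv.Perm (Vtx X)) (w : Vtx X) : Vtx X → Vtx X :=
  fun t => (f (w ++ t)).drop w.length

/-- The rigid stabilizer of the vertex `v` in the full automorphism group:
all permutations moving only (proper or improper) descendants of `v`. -/
def rist (v : Vtx X) : Subgroup (Equiv.Perm (Vtx X)) where
  carrier := {g | ∀ w : Vtx X, ¬ v <+: w → g w = w}
  one_mem' := by intro w _; rfl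
  mul_mem' := by
    intro a b ha hb w hw
    have : (a * b) w = a (b w) := rfl
    rw [this, hb w hw, ha w hw]
  inv_mem' := by
    intro a ha w hw
    have h := ha w hw
    conv_lhs => rw [← h]
    exact Equiv.symm_apply_apply a w

/-- The rigid stabilizer of `v` in `G`. -/
def ristG (G : Subgroup (Equiv.Perm (Vtx X))) (v : Vtx X) :
    Subgroup (Equiv.Perm (Vtx X)) :=
  rist v ⊓ G

/-- The `n`-th level rigid stabilizer of `G`: the subgroup generated by the
rigid stabilizers of all vertices of level `n`. -/
def ristLevel (G : Subgroup (Equiv.Perm (Vtx X))) (n : ℕ) :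
    Subgroup (Equiv.Perm (Vtx X)) :=
  ⨆ v ∈ {v : Vtx X | v.length = n}, ristG G v

/-- The `n`-th level stabilizer of `G`: elements fixing all vertices of level `≤ n`. -/
def stabLevel (G : Subgroup (Equiv.Perm (Vtx X))) (n : ℕ) :
    Subgroup (Equiv.Perm (Vtx X)) :=
  G ⊓ { carrier := {g | ∀ w : Vtx X, w.length ≤ n → g w = w}
        one_mem' := by intro w _; rfl
        mul_mem' := by
          intro a b ha hb w hw
          have : (a * b) w = a (b w) := rfl
          rw [this, hb w hw, ha w hw]
        inv_mem' := by
          intro a ha w hw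
          have h := ha w hw
          conv_lhs => rw [← h]
          exact Equiv.symm_apply_apply a w }

/-- Underlying function of the vtr `v*g`. -/
def vtrFun (v : Vtx X) (g : Vtx X → Vtx X) : Vtx X → Vtx X :=
  fun w => if v <+: w then v ++ g (w.drop v.length) else w

lemma vtr_aux (v : Vtx X) (g h : Vtx X → Vtx X)
    (hgh : ∀ t, h (g t) = t) (w : Vtx X) :
    vtrFun v h (vtrFun v g w) = w := by
  by_cases hp : v <+: w
  · obtain ⟨t, rfl⟩ := hp
    simp [vtrFun, List.drop_left, hgh, List.prefix_append]
  · simp [vtrFun, hp]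

/-- The vtr `v*g`: the automorphism acting as `g` on the subtree rooted
at `v` and trivially elsewhere. -/
def vtr (v : Vtx X) (g : Equiv.Perm (Vtx X)) : Equiv.Perm (Vtx X) where
  toFun := vtrFun v g
  invFun := vtrFun v g.symm
  left_inv := vtr_aux v g g.symm fun t => g.symm_apply_apply t
  right_inv := vtr_aux v g.symm g fun t => g.apply_symm_apply t

lemma vtr_apply (v : Vtx X) (g : Equiv.Perm (Vtx X)) (w : Vtx X) :
    vtr v g w = if v <+: w then v ++ g (w.drop v.length) else w := rfl

/-- `g ↦ v*g` as a group homomorphism. -/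
def vtrHom (v : Vtx X) : Equiv.Perm (Vtx X) →* Equiv.Perm (Vtx X) where
  toFun := vtr v
  map_one' := by
    ext w
    by_cases hp : v <+: w
    · obtain ⟨t, rfl⟩ := hp
      simp [vtr, vtrFun, List.drop_left, List.prefix_append]
    · simp [vtr, vtrFun, hp]
  map_mul' := by
    intro a b
    ext w
    have hmul : (vtr v a * vtr v b) w = vtr v a (vtr v b w) := rfl
    rw [hmul]
    by_cases hp : v <+: w
    · obtain ⟨t, rfl⟩ := hp
      simp [vtr, vtrFun, List.drop_left, List.prefix_append]
    · simp [vtr, vtrFun, hp]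

/-- `K` is a branching subgroup of `G`: `K ≤ G` and `v*K ≤ K` for all vertices. -/
def IsBranching (G K : Subgroup (Equiv.Perm (Vtx X))) : Prop :=
  K ≤ G ∧ ∀ v : Vtx X, ∀ g ∈ K, vtr v g ∈ K

/-- The product `X^n * K` of the translates `v*K` over all vertices of level `n`. -/
def levelProd (K : Subgroup (Equiv.Perm (Vtx X))) (n : ℕ) :
    Subgroup (Equiv.Perm (Vtx X)) :=
  Subgroup.closure {p | ∃ v : Vtx X, v.length = n ∧ ∃ g ∈ K, p = vtr v g}

/-- The group `G⋉v` of states at `v` of the rigid stabilizer: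
those `g ∈ G` with `v*g ∈ G`. -/
def pristSub (G : Subgroup (Equiv.Perm (Vtx X))) (v : Vtx X) :
    Subgroup (Equiv.Perm (Vtx X)) :=
  G ⊓ G.comap (vtrHom v)

/-- `G_#`, the intersection of all `G⋉v` (the maximal branching subgroup when
`G` is regular branch). -/
def Gsharp (G : Subgroup (Equiv.Perm (Vtx X))) : Subgroup (Equiv.Perm (Vtx X)) :=
  ⨅ v : Vtx X, pristSub G v

/-- `G` is self-similar: all states of elements of `G` are (induced by) elements of `G`. -/
def SelfSimilar (G : Subgroup (Equiv.Perm (Vtx X))) : Prop :=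
  ∀ g ∈ G, ∀ w : Vtx X, ∃ h ∈ G, ∀ t : Vtx X, h t = stateFun g w t

/-- `G` is level-transitive: transitive on each level of the tree. -/
def LevelTransitive (G : Subgroup (Equiv.Perm (Vtx X))) : Prop :=
  ∀ v w : Vtx X, v.length = w.length → ∃ g ∈ G, g v = w

/-- `G` is recurrent: the state at `v` of the stabilizer of `v` is all of `G`. -/
def Recurrent (G : Subgroup (Equiv.Perm (Vtx X))) : Prop :=
  ∀ v : Vtx X, ∀ h : Equiv.Perm (Vtx X),
    (h ∈ G ↔ ∃ g ∈ G, g v = v ∧ ∀ t : Vtx X, h t = stateFun g v t)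

/-- `G` is a regular branch group (for this action): it has a non-trivial
branching subgroup `K` with all products `X^n*K` of finite index in `G`. -/
def RegularBranch (G : Subgroup (Equiv.Perm (Vtx X))) : Prop :=
  ∃ K : Subgroup (Equiv.Perm (Vtx X)), IsBranching G K ∧ K ≠ ⊥ ∧
    ∀ n : ℕ, ((levelProd K n).subgroupOf G).FiniteIndex

/-- The subgroup generated by `e`-th powers of elements of `H`. -/
def powSubgroup {P : Type*} [Group P] (H : Subgroup P) (e : ℕ) : Subgroup P :=
  Subgroup.closure {x | ∃ h ∈ H, x = h ^ e}

/-- The normal closure of `g` in the subgroup `Γ`. -/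
def nclosure {P : Type*} [Group P] (Γ : Subgroup P) (g : P) : Subgroup P :=
  Subgroup.closure {x | ∃ h ∈ Γ, x = h * g * h⁻¹}

/-- `g` is finite-state: it has only finitely many states. -/
def FiniteState (g : Equiv.Perm (Vtx X)) : Prop :=
  {f : Vtx X → Vtx X | ∃ w : Vtx X, f = stateFun g w}.Finite

/-- `g` fixes the boundary ray `y`, i.e. it fixes each of its finite prefixes. -/
def fixesRay (g : Equiv.Perm (Vtx X)) (y : ℕ → X) : Prop :=
  ∀ n : ℕ, g ((List.range n).map y) = (List.range n).map y

end Tree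

/-- A group satisfies a (non-trivial) group law. -/
def SatisfiesLaw (G : Type*) [Group G] : Prop :=
  ∃ w : FreeGroup ℕ, w ≠ 1 ∧ ∀ φ : FreeGroup ℕ →* G, φ w = 1


section AuxProof

variable {X : Type*} [DecidableEq X]

lemma vtr_nil' (g : Equiv.Perm (Vtx X)) : vtr ([] : Vtx X) g = g := by
  ext w
  simp [vtr_apply]

lemma vtr_append' (u v : Vtx X) (g : Equiv.Perm (Vtx X)) :
    vtr (u ++ v) g = vtr u (vtr v g) := by
  apply Equiv.ext
  intro w
  by_cases h : u <+: w
  · obtain ⟨r, rfl⟩ := h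
    by_cases hv : v <+: r
    · obtain ⟨t, rfl⟩ := hv
      rw [vtr_apply, vtr_apply, if_pos (List.prefix_append u _), List.drop_left,
          vtr_apply, if_pos (List.prefix_append v t), List.drop_left,
          ← List.append_assoc, if_pos (List.prefix_append (u ++ v) t), List.drop_left,
          List.append_assoc]
    · have h2 : ¬ (u ++ v) <+: (u ++ r) := by
        intro hc
        exact hv ((List.prefix_append_right_inj u).mp hc)
      rw [vtr_apply, if_neg h2, vtr_apply, if_pos (List.prefix_append u r), List.drop_left,
          vtr_apply, if_neg hv]
  · have h2 : ¬ (u ++ v) <+: w := fun hc => h ((List.prefix_append u v).trans hc)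
    rw [vtr_apply, if_neg h2, vtr_apply, if_neg h]

lemma isTreeAut_append {f : Equiv.Perm (Vtx X)} (hf : IsTreeAut f) (v t : Vtx X) :
    ∃ r : Vtx X, r.length = t.length ∧ f (v ++ t) = f v ++ r := by
  induction t using List.reverseRecOn with
  | nil => exact ⟨[], rfl, by simp⟩
  | append_singleton t x ih =>
    obtain ⟨r, hr, hfr⟩ := ih
    obtain ⟨y, hy⟩ := hf.2 (v ++ t) x
    exact ⟨r ++ [y], by simp [hr],
      by rw [← List.append_assoc, hy, hfr, List.append_assoc]⟩

lemma isTreeAut_length {f : Equiv.Perm (Vtx X)} (hf : IsTreeAut f) (v : Vtx X) :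
    (f v).length = v.length := by
  obtain ⟨r, hr, hfr⟩ := isTreeAut_append hf [] v
  rw [List.nil_append, hf.1, List.nil_append] at hfr
  rw [hfr, hr]

lemma isTreeAut_apply_append {f : Equiv.Perm (Vtx X)} (hf : IsTreeAut f) (v t : Vtx X) :
    f (v ++ t) = f v ++ stateFun f v t := by
  obtain ⟨r, _, hfr⟩ := isTreeAut_append hf v t
  have hst : stateFun f v t = r := by
    rw [stateFun]
    show (f (v ++ t)).drop v.length = r
    rw [hfr, ← isTreeAut_length hf v, List.drop_left]
  rw [hst, hfr]

lemma stateFun_vtr' (u : Vtx X) (h : Equiv.Perm (Vtx X)) (t : Vtx X) :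
    stateFun (vtr u h) u t = h t := by
  show ((vtr u h) (u ++ t)).drop u.length = h t
  rw [vtr_apply, if_pos (List.prefix_append u t), List.drop_left, List.drop_left]

lemma mem_pristSub' {G : Subgroup (Equiv.Perm (Vtx X))} {v : Vtx X}
    {g : Equiv.Perm (Vtx X)} : g ∈ pristSub G v ↔ g ∈ G ∧ vtr v g ∈ G := by
  rw [pristSub, Subgroup.mem_inf, Subgroup.mem_comap]
  rfl

lemma pristSub_append_le' {G : Subgroup (Equiv.Perm (Vtx X))} (hSS : SelfSimilar G)
    (u v : Vtx X) : pristSub G (u ++ v) ≤ pristSub G v := by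
  intro g hg
  rw [mem_pristSub'] at hg ⊢
  obtain ⟨hgG, hgc⟩ := hg
  rw [vtr_append'] at hgc
  obtain ⟨h, hhG, hh⟩ := hSS _ hgc u
  have heq : h = vtr v g := Equiv.ext fun t => by rw [hh t, stateFun_vtr']
  exact ⟨hgG, heq ▸ hhG⟩

lemma K_le_pristSub' {G K : Subgroup (Equiv.Perm (Vtx X))} (hBr : IsBranching G K)
    (v : Vtx X) : K ≤ pristSub G v := fun g hg =>
  mem_pristSub'.mpr ⟨hBr.1 hg, hBr.1 (hBr.2 v g hg)⟩

lemma levelProd_zero' (K : Subgroup (Equiv.Perm (Vtx X))) : levelProd K 0 = K := by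
  rw [levelProd]
  have hset : {p | ∃ v : Vtx X, v.length = 0 ∧ ∃ g ∈ K, p = vtr v g} = (K : Set (Equiv.Perm (Vtx X))) := by
    ext p
    constructor
    · rintro ⟨v, hv, g, hg, rfl⟩
      rw [List.length_eq_zero_iff] at hv
      subst hv
      rwa [vtr_nil']
    · intro hp
      exact ⟨[], rfl, p, hp, (vtr_nil' p).symm⟩
  rw [hset, Subgroup.closure_eq]

lemma perm_apply_inv_self' (f : Equiv.Perm (Vtx X)) (x : Vtx X) : f (f⁻¹ x) = x :=
  Equiv.apply_symm_apply f x

lemma perm_inv_apply_self' (f : Equiv.Perm (Vtx X)) (x : Vtx X) : f⁻¹ (f x) = x :=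
  Equiv.symm_apply_apply f x

lemma conj_vtr' {a : Equiv.Perm (Vtx X)} (ha : IsTreeAut a) {v w : Vtx X}
    (hvw : a v = w) (hlen : v.length = w.length)
    {s : Equiv.Perm (Vtx X)} (hs : ∀ t, s t = stateFun a v t)
    (g : Equiv.Perm (Vtx X)) :
    a * vtr v g * a⁻¹ = vtr w (s * g * s⁻¹) := by
  have key : ∀ t, a (v ++ t) = w ++ s t := fun t => by
    rw [isTreeAut_apply_append ha, hvw, hs]
  have key2 : ∀ t, a⁻¹ (w ++ t) = v ++ s⁻¹ t := fun t => by
    have h1 := key (s⁻¹ t)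
    rw [perm_apply_inv_self'] at h1
    rw [← h1, perm_inv_apply_self']
  apply Equiv.ext
  intro w'
  show a (vtr v g (a⁻¹ w')) = vtr w (s * g * s⁻¹) w'
  by_cases hp : w <+: w'
  · obtain ⟨t, rfl⟩ := hp
    rw [key2, vtr_apply, if_pos (List.prefix_append v _), List.drop_left, key,
        vtr_apply, if_pos (List.prefix_append w t), List.drop_left]
    rfl
  · have hnp : ¬ v <+: a⁻¹ w' := by
      rintro ⟨r, hr⟩
      apply hp
      have hw' : w' = w ++ s r := by
        rw [← key r, hr, perm_apply_inv_self']
      exact hw' ▸ List.prefix_append w (s r)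
    rw [vtr_apply, if_neg hnp, perm_apply_inv_self', vtr_apply, if_neg hp]

lemma map_conj_symm_self {M : Type*} [Group M] (G : Subgroup M) {s : M} (hs : s ∈ G) :
    G.map (MulAut.conj s).symm.toMonoidHom = G := by
  ext x
  simp only [Subgroup.mem_map, MulEquiv.coe_toMonoidHom, MulAut.conj_symm_apply]
  constructor
  · rintro ⟨g, hg, rfl⟩
    exact mul_mem (mul_mem (inv_mem hs) hg) hs
  · intro hx
    exact ⟨s * x * s⁻¹, mul_mem (mul_mem hs hx) (inv_mem hs), by group⟩

lemma relIndex_dvd_of_conj_le' {M : Type*} [Group M] (G A B : Subgroup M) (hB : B ≤ G)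
    {s : M} (hs : s ∈ G) (h : ∀ g ∈ A, s * g * s⁻¹ ∈ B) :
    B.relIndex G ∣ A.relIndex G := by
  have hmap : A.map (MulAut.conj s).toMonoidHom ≤ B := by
    rintro x ⟨g, hg, rfl⟩
    exact h g hg
  have h1 : (A.map (MulAut.conj s).toMonoidHom).relIndex G = A.relIndex G := by
    rw [Subgroup.map_equiv_eq_comap_symm', Subgroup.relIndex_comap,
        map_conj_symm_self G hs]
  rw [← h1, ← Subgroup.relIndex_mul_relIndex (A.map (MulAut.conj s).toMonoidHom) B G hmap hB]
  exact Dvd.intro_left _ rfl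

end AuxProof

/-- In a self-similar, level-transitive, regular branch group the
groups `G⋉v` only depend on `v` once `v` is long enough: there is `n` with
`G⋉(uv) = G⋉v` whenever `|v| ≥ n`. -/
theorem exists_level_prist_stable
    {X : Type*} [DecidableEq X] [Fintype X]
    (G : Subgroup (Equiv.Perm (Vtx X))) (hAut : ∀ g ∈ G, IsTreeAut g)
    (hSS : SelfSimilar G) (hLT : LevelTransitive G) (hRB : RegularBranch G) :
    ∃ n : ℕ, ∀ u v : Vtx X, n ≤ v.length → pristSub G (u ++ v) = pristSub G v := by
    classical
  obtain ⟨K, hBr, hKne, hFin⟩ := hRB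
  rcases isEmpty_or_nonempty X with hX | hX
  · -- degenerate case: the tree has a single vertex
    refine ⟨0, fun u v _ => ?_⟩
    have hnil : ∀ l : Vtx X, l = [] := fun l => by
      cases l with
      | nil => rfl
      | cons x t => exact (hX.false x).elim
    have hone : ∀ x : Equiv.Perm (Vtx X), x = 1 := fun x =>
      Equiv.ext fun t => by rw [hnil (x t), hnil t]; rfl
    ext x
    rw [hone x]
    simp [one_mem]
  · set P : Vtx X → Subgroup (Equiv.Perm (Vtx X)) := fun v => pristSub G v with hP
    set d : Vtx X → ℕ := fun v => (P v).relIndex G with hd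
    have hPle : ∀ v, P v ≤ G := fun v => inf_le_left
    have hKP : ∀ v, K ≤ P v := fun v => K_le_pristSub' hBr v
    -- K has finite index in G
    have hN : K.relIndex G ≠ 0 := by
      have := (hFin 0).index_ne_zero
      rwa [levelProd_zero'] at this
    have hdN : ∀ v, d v ∣ K.relIndex G := fun v =>
      Dvd.intro_left _ (Subgroup.relIndex_mul_relIndex K (P v) G (hKP v) (hPle v))
    have hd0 : ∀ v, d v ≠ 0 := fun v hv => hN (by
      rw [← Subgroup.relIndex_mul_relIndex K (P v) G (hKP v) (hPle v),
        show (P v).relIndex G = d v from rfl, hv, mul_zero])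
    -- extending on the left makes the group smaller, the index a multiple
    have hmono : ∀ u v : Vtx X, P (u ++ v) ≤ P v := fun u v =>
      pristSub_append_le' hSS u v
    have hdvd : ∀ u v : Vtx X, d v ∣ d (u ++ v) := fun u v =>
      Dvd.intro_left _ (Subgroup.relIndex_mul_relIndex (P (u ++ v)) (P v) G
        (hmono u v) (hPle v))
    -- the index only depends on the length
    have hconj : ∀ v w : Vtx X, v.length = w.length → d w ∣ d v := by
      intro v w hl
      obtain ⟨a, haG, hav⟩ := hLT v w hl
      obtain ⟨s, hsG, hss⟩ := hSS a haG v
      refine relIndex_dvd_of_conj_le' G (P v) (P w) (hPle w) hsG ?_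
      intro g hg
      rw [hP] at hg ⊢
      rw [mem_pristSub'] at hg ⊢
      refine ⟨mul_mem (mul_mem hsG hg.1) (inv_mem hsG), ?_⟩
      rw [← conj_vtr' (hAut a haG) hav hl hss g]
      exact mul_mem (mul_mem haG hg.2) (inv_mem haG)
    have hlen : ∀ v w : Vtx X, v.length = w.length → d v = d w := fun v w hl =>
      Nat.dvd_antisymm (hconj w v hl.symm) (hconj v w hl)
    -- the stabilizing level
    obtain ⟨x0⟩ := hX
    set D : ℕ → ℕ := fun n => d (List.replicate n x0) with hD
    have hDbdd : BddAbove (Set.range D) := by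
      refine ⟨K.relIndex G, ?_⟩
      rintro m ⟨n, rfl⟩
      exact Nat.le_of_dvd (Nat.pos_of_ne_zero hN) (hdN _)
    obtain ⟨n0, hn0⟩ : ∃ n0, D n0 = sSup (Set.range D) := by
      have := Nat.sSup_mem (s := Set.range D) ⟨D 0, 0, rfl⟩ hDbdd
      obtain ⟨n0, hn0⟩ := this
      exact ⟨n0, hn0⟩
    have hDconst : ∀ n, n0 ≤ n → D n = D n0 := by
      intro n hn
      have h1 : D n0 ∣ D n := by
        have : List.replicate n x0 = List.replicate (n - n0) x0 ++ List.replicate n0 x0 := by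
          rw [← List.replicate_add, Nat.sub_add_cancel hn]
        rw [hD]
        simp only []
        rw [this]
        exact hdvd _ _
      have h2 : D n ≤ D n0 := by
        rw [hn0]
        exact le_csSup hDbdd ⟨n, rfl⟩
      exact Nat.le_antisymm h2 (Nat.le_of_dvd (Nat.pos_of_ne_zero (hd0 _)) h1)
    refine ⟨n0, fun u v hv => ?_⟩
    have h1 : d v = D n0 := by
      have : d v = D v.length := hlen v (List.replicate v.length x0) (by simp)
      rw [this, hDconst v.length hv]
    have h2 : d (u ++ v) = D n0 := by
      have : d (u ++ v) = D (u ++ v).length :=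
        hlen (u ++ v) (List.replicate (u ++ v).length x0) (by simp)
      rw [this, hDconst (u ++ v).length (le_trans hv (by simp))]
    have hle := hmono u v
    have hkey : (P (u ++ v)).relIndex (P v) * d v = d (u ++ v) :=
      Subgroup.relIndex_mul_relIndex (P (u ++ v)) (P v) G hle (hPle v)
    rw [h1, h2] at hkey
    have hone : (P (u ++ v)).relIndex (P v) = 1 := by
      have hD0 : D n0 ≠ 0 := by rw [← h1]; exact hd0 v
      exact Nat.eq_of_mul_eq_mul_right (Nat.pos_of_ne_zero hD0) (by rw [hkey, one_mul])
    exact le_antisymm hle (Subgroup.relIndex_eq_one.mp hone)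
end

section
/- Let Γ ≤ Aut(X*) be a weakly branch group generated by a finite set of finite-state automorphisms. Then Γ does not fix any ray w ∈ X^ω of the boundary of the tree. -/
open List

section Aux

variable {X : Type*} [DecidableEq X]

lemma treeAut_len {f : Equiv.Perm (Vtx X)} (hf : IsTreeAut f) :
    ∀ w : Vtx X, (f w).length = w.length := by
  intro w
  induction w using List.reverseRecOn with
  | nil => simp [hf.1]
  | append_singleton w x ih =>
    obtain ⟨y, hy⟩ := hf.2 w x
    simp [hy, ih]

lemma treeAut_append {f : Equiv.Perm (Vtx X)} (hf : IsTreeAut f) (w t : Vtx X) :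
    f (w ++ t) = f w ++ stateFun f w t := by
  have h : ∃ t', f (w ++ t) = f w ++ t' := by
    induction t using List.reverseRecOn with
    | nil => exact ⟨[], by simp⟩
    | append_singleton t x ih =>
      obtain ⟨t', ht'⟩ := ih
      obtain ⟨y, hy⟩ := hf.2 (w ++ t) x
      exact ⟨t' ++ [y], by rw [← List.append_assoc, hy, ht', List.append_assoc]⟩
  obtain ⟨t', ht'⟩ := h
  have hlen : (f w).length = w.length := treeAut_len hf w
  have : stateFun f w t = t' := by
    simp only [stateFun, ht', ← hlen, List.drop_left]
  rw [this, ht']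

lemma treeAut_mul {a b : Equiv.Perm (Vtx X)} (ha : IsTreeAut a) (hb : IsTreeAut b) :
    IsTreeAut (a * b) := by
  constructor
  · simp [Equiv.Perm.mul_apply, hb.1, ha.1]
  · intro w x
    obtain ⟨y, hy⟩ := hb.2 w x
    obtain ⟨y', hy'⟩ := ha.2 (b w) y
    exact ⟨y', by simp [Equiv.Perm.mul_apply, hy, hy']⟩

lemma treeAut_one : IsTreeAut (1 : Equiv.Perm (Vtx X)) :=
  ⟨rfl, fun _ x => ⟨x, rfl⟩⟩

lemma treeAut_inv [Fintype X] {f : Equiv.Perm (Vtx X)} (hf : IsTreeAut f) :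
    IsTreeAut f⁻¹ := by
  constructor
  · apply f.injective
    rw [Equiv.Perm.coe_inv, Equiv.apply_symm_apply, hf.1]
  · intro w x
    obtain ⟨F, hF⟩ : ∃ F : X → X, ∀ x' : X, f (f⁻¹ w ++ [x']) = w ++ [F x'] := by
      choose F hF using hf.2 (f⁻¹ w)
      refine ⟨F, fun x' => ?_⟩
      rw [hF x', Equiv.Perm.coe_inv, Equiv.apply_symm_apply]
    have hFinj : Function.Injective F := by
      intro a b hab
      have h1 : f (f⁻¹ w ++ [a]) = f (f⁻¹ w ++ [b]) := by
        rw [hF a, hF b, hab]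
      have := f.injective h1
      simpa using this
    obtain ⟨x', hx'⟩ := Finite.injective_iff_surjective.mp hFinj x
    refine ⟨x', ?_⟩
    apply f.injective
    rw [← Equiv.Perm.mul_apply, mul_inv_cancel, Equiv.Perm.one_apply, hF x', hx']

lemma stateFun_one (w t : Vtx X) : stateFun (1 : Equiv.Perm (Vtx X)) w t = t := by
  simp [stateFun]

lemma stateFun_mul {a b : Equiv.Perm (Vtx X)} (ha : IsTreeAut a) (hb : IsTreeAut b)
    {w : Vtx X} (haw : a w = w) (hbw : b w = w) (t : Vtx X) :
    stateFun (a * b) w t = stateFun a w (stateFun b w t) := by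
  show ((a * b) (w ++ t)).drop w.length = _
  rw [Equiv.Perm.mul_apply, treeAut_append hb w t, hbw, treeAut_append ha w _, haw]
  simp only [stateFun]
  rw [List.drop_left]

lemma inv_fix {f : Equiv.Perm (Vtx X)} {w : Vtx X} (hw : f w = w) : f⁻¹ w = w := by
  apply f.injective
  rw [Equiv.Perm.coe_inv, Equiv.apply_symm_apply, hw]

lemma stateFun_inv_right [Fintype X] {f : Equiv.Perm (Vtx X)} (hf : IsTreeAut f)
    {w : Vtx X} (hw : f w = w) (t : Vtx X) :
    stateFun f w (stateFun f⁻¹ w t) = t := by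
  have := stateFun_mul hf (treeAut_inv hf) hw (inv_fix hw) t
  rw [mul_inv_cancel, stateFun_one] at this
  exact this.symm

lemma stateFun_inv_left [Fintype X] {f : Equiv.Perm (Vtx X)} (hf : IsTreeAut f)
    {w : Vtx X} (hw : f w = w) (t : Vtx X) :
    stateFun f⁻¹ w (stateFun f w t) = t := by
  have := stateFun_mul (treeAut_inv hf) hf (inv_fix hw) hw t
  rw [inv_mul_cancel, stateFun_one] at this
  exact this.symm

/-- The subgroup of tree automorphisms fixing `u` and `v` with equal states there. -/
def goodSub [Fintype X] (u v : Vtx X) : Subgroup (Equiv.Perm (Vtx X)) where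
  carrier := {g | IsTreeAut g ∧ g u = u ∧ g v = v ∧ stateFun g u = stateFun g v}
  one_mem' := ⟨treeAut_one, rfl, rfl, by funext t; rw [stateFun_one, stateFun_one]⟩
  mul_mem' := by
    rintro a b ⟨ha, hau, hav, has⟩ ⟨hb, hbu, hbv, hbs⟩
    refine ⟨treeAut_mul ha hb, by simp [Equiv.Perm.mul_apply, hbu, hau],
      by simp [Equiv.Perm.mul_apply, hbv, hav], ?_⟩
    funext t
    rw [stateFun_mul ha hb hau hbu, stateFun_mul ha hb hav hbv, has, hbs]
  inv_mem' := by
    rintro a ⟨ha, hau, hav, has⟩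
    refine ⟨treeAut_inv ha, inv_fix hau, inv_fix hav, ?_⟩
    funext t
    have h1 : stateFun a u (stateFun a⁻¹ v t) = t := by
      rw [has]; exact stateFun_inv_right ha hav t
    calc stateFun a⁻¹ u t = stateFun a⁻¹ u (stateFun a u (stateFun a⁻¹ v t)) := by rw [h1]
      _ = stateFun a⁻¹ v t := stateFun_inv_left ha hau _

end Aux

/-- a weakly branch group generated by finitely many finite-state
automorphisms fixes no boundary ray. -/
theorem no_fixed_ray
    {X : Type*} [DecidableEq X] [Fintype X]
    (Γ : Subgroup (Equiv.Perm (Vtx X)))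
    (S : Set (Equiv.Perm (Vtx X))) (hSfin : S.Finite)
    (hSst : ∀ s ∈ S, IsTreeAut s ∧ FiniteState s)
    (hgen : Γ = Subgroup.closure S)
    (hwb : ∀ v : Vtx X, ristG Γ v ≠ ⊥) :
    ¬ ∃ y : ℕ → X, ∀ g ∈ Γ, fixesRay g y := by
  rintro ⟨y, hy⟩
  haveI : Finite ↥S := hSfin.to_subtype
  set p : ℕ → Vtx X := fun n => (List.range n).map y with hp
  -- pigeonhole on the tuple of states of the generators along the ray
  set φ : ℕ → (↥S → (Vtx X → Vtx X)) := fun n s => stateFun s.1 (p n) with hφ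
  have hfin : (Set.range φ).Finite := by
    refine Set.Finite.subset (Set.Finite.pi (t := fun s : ↥S =>
      {f : Vtx X → Vtx X | ∃ w : Vtx X, f = stateFun s.1 w}) fun s => (hSst s.1 s.2).2) ?_
    rintro _ ⟨n, rfl⟩
    intro s _
    exact ⟨p n, rfl⟩
  haveI : Finite ↥(Set.range φ) := hfin.to_subtype
  obtain ⟨a, b, hab, habeq⟩ :=
    Finite.exists_ne_map_eq_of_infinite (fun n => (⟨φ n, ⟨n, rfl⟩⟩ : ↥(Set.range φ)))
  have habeq' : φ a = φ b := congrArg Subtype.val habeq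
  -- wlog m < n
  obtain ⟨m, n, hmn, hφeq⟩ : ∃ m n, m < n ∧ φ m = φ n := by
    rcases hab.lt_or_gt with h | h
    · exact ⟨a, b, h, habeq'⟩
    · exact ⟨b, a, h, habeq'.symm⟩
  set u : Vtx X := p m with hu
  set z : Vtx X := (p n).drop m with hz
  have hpn : p n = u ++ z := by
    have : (p n).take m = u := by
      simp only [hu, hp, ← List.map_take, List.take_range, min_eq_left hmn.le]
    rw [← this, hz, List.take_append_drop]
  have hzne : z ≠ [] := by
    intro h
    have : z.length = n - m := by simp [hz, hp]
    rw [h] at this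
    simp only [List.length_nil] at this
    omega
  -- every generator fixes `u`, `u ++ z` and has equal states there
  have hSg : S ⊆ ↑(goodSub u (u ++ z)) := by
    intro s hs
    have hsΓ : s ∈ Γ := hgen ▸ Subgroup.subset_closure hs
    have hfix := hy s hsΓ
    refine ⟨(hSst s hs).1, hfix m, by rw [← hpn]; exact hfix n, ?_⟩
    have := congrFun hφeq ⟨s, hs⟩
    simpa [φ, ← hpn, ← hu] using this
  have hΓg : Γ ≤ goodSub u (u ++ z) := by
    rw [hgen]
    exact (Subgroup.closure_le _).2 hSg
  -- a nontrivial element of the rigid stabilizer of `u ++ z`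
  obtain ⟨⟨g, hgmem⟩, hgne⟩ := Subgroup.ne_bot_iff_exists_ne_one.mp (hwb (u ++ z))
  have hgΓ : g ∈ Γ := hgmem.2
  obtain ⟨hgaut, hgu, hguz, hgs⟩ := hΓg hgΓ
  have hrist : ∀ w : Vtx X, ¬ (u ++ z) <+: w → g w = w := hgmem.1
  -- the state of `g` at `u` is the identity
  have hkey : ∀ N (t : Vtx X), t.length ≤ N → stateFun g u t = t := by
    intro N
    induction N with
    | zero =>
      intro t ht
      have : t = [] := List.eq_nil_of_length_eq_zero (Nat.le_zero.mp ht)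
      subst this
      simp [stateFun, hgu]
    | succ N ih =>
      intro t ht
      by_cases hpz : z <+: t
      · obtain ⟨t', rfl⟩ := hpz
        have h1 : stateFun g u (z ++ t') = z ++ stateFun g (u ++ z) t' := by
          show (g (u ++ (z ++ t'))).drop u.length = _
          rw [← List.append_assoc, treeAut_append hgaut (u ++ z) t', hguz,
            List.append_assoc, List.drop_left]
        have hlen : t'.length ≤ N := by
          have hzlen : 0 < z.length := List.length_pos_iff.mpr hzne
          simp only [List.length_append] at ht
          omega
        rw [h1, ← hgs, ih t' hlen]
      · have hnp : ¬ (u ++ z) <+: (u ++ t) := by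
          rw [List.prefix_append_right_inj]
          exact hpz
        show (g (u ++ t)).drop u.length = t
        rw [hrist _ hnp, List.drop_left]
  -- hence `g` is trivial, contradiction
  have hfixall : ∀ w : Vtx X, g w = w := by
    intro w
    by_cases hw : (u ++ z) <+: w
    · obtain ⟨t, rfl⟩ := hw
      rw [List.append_assoc, treeAut_append hgaut u (z ++ t), hgu,
        hkey (z ++ t).length (z ++ t) le_rfl]
    · exact hrist w hw
  have hg1 : g = 1 :=
    Equiv.ext fun w => (hfixall w).trans (Equiv.Perm.one_apply w).symm
  exact hgne (Subtype.ext hg1)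
end

section
/- Let Γ ≤ Aut(T) be a level-transitive branch group and N a non-trivial normal subgroup of Γ. If N satisfies a non-trivial group law, then Γ satisfies a non-trivial group law. -/
open List

open scoped commutatorElement

namespace LawAux

def R : ℕ × Bool → ℕ × Bool → Prop := fun p q => ¬(p.1 = q.1 ∧ p.2 = !q.2)

lemma Rne {a b : ℕ} (h : a ≠ b) (s t : Bool) : R (a, s) (b, t) := fun hc => absurd hc.1 h

def blk (e : ℕ) : ℕ × Bool → List (ℕ × Bool)
  | (i, true) => replicate e (2*i, true) ++ replicate e (2*i+1, true)
      ++ replicate e (2*i, false) ++ replicate e (2*i+1, false)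
  | (i, false) => replicate e (2*i+1, true) ++ replicate e (2*i, true)
      ++ replicate e (2*i+1, false) ++ replicate e (2*i, false)

lemma chain'_reduce (L : List (ℕ × Bool)) : List.Chain' R (FreeGroup.reduce L) := by
  induction L with
  | nil => exact List.isChain_nil
  | cons p L ih =>
    rw [FreeGroup.reduce.cons]
    rcases h : FreeGroup.reduce L with _ | ⟨q, t⟩
    · exact List.isChain_singleton _
    · rw [h] at ih
      show Chain' R (if p.1 = q.1 ∧ p.2 = !q.2 then t else p :: q :: t)
      by_cases hc : p.1 = q.1 ∧ p.2 = !q.2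
      · rw [if_pos hc]
        exact ih.tail
      · rw [if_neg hc]
        exact List.IsChain.cons_cons hc ih

lemma reduce_eq_self_of_chain' {L : List (ℕ × Bool)} (h : List.Chain' R L) :
    FreeGroup.reduce L = L := by
  induction L with
  | nil => rfl
  | cons p L ih =>
    rw [FreeGroup.reduce.cons, ih h.tail]
    rcases L with _ | ⟨q, t⟩
    · rfl
    · show (if p.1 = q.1 ∧ p.2 = !q.2 then t else p :: q :: t) = p :: q :: t
      rw [if_neg (List.isChain_cons_cons.mp h).1]


lemma getLast?_replicate' {α : Type*} (e : ℕ) (he : e ≠ 0) (x : α) :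
    (replicate e x).getLast? = some x := by
  induction e with
  | zero => exact absurd rfl he
  | succ n ih =>
    rcases Nat.eq_zero_or_pos n with rfl | hn
    · rfl
    · rw [replicate_succ, List.getLast?_cons, ih (by omega)]
      simp [List.getLast?_eq_none_iff, ← List.length_eq_zero_iff, replicate, (by omega : n ≠ 0)]

lemma head?_rep_append {α : Type*} (e : ℕ) (he : e ≠ 0) (x : α) (l : List α) :
    (replicate e x ++ l).head? = some x := by
  rcases Nat.exists_eq_succ_of_ne_zero he with ⟨n, rfl⟩
  rw [replicate_succ]; rfl

lemma head?_replicate' {α : Type*} (e : ℕ) (he : e ≠ 0) (x : α) :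
    (replicate e x).head? = some x := by
  rcases Nat.exists_eq_succ_of_ne_zero he with ⟨n, rfl⟩
  rw [replicate_succ]; rfl

def firstL : ℕ × Bool → ℕ × Bool
  | (i, true) => (2*i, true)
  | (i, false) => (2*i+1, true)

def lastL : ℕ × Bool → ℕ × Bool
  | (i, true) => (2*i+1, false)
  | (i, false) => (2*i, false)

lemma blk_head? (e : ℕ) (he : e ≠ 0) (p : ℕ × Bool) : (blk e p).head? = some (firstL p) := by
  rcases p with ⟨i, b⟩
  cases b <;> simp [blk, firstL, head?_rep_append e he]

lemma blk_getLast? (e : ℕ) (he : e ≠ 0) (p : ℕ × Bool) :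
    (blk e p).getLast? = some (lastL p) := by
  rcases p with ⟨i, b⟩
  cases b <;>
    simp [blk, lastL, List.getLast?_append, getLast?_replicate' e he]

lemma chain'_replicate (x : ℕ × Bool) (e : ℕ) : Chain' R (replicate e x) := by
  apply List.isChain_replicate_of_rel
  simp [R]

lemma chain'_app {l₁ l₂ : List (ℕ × Bool)} (h₁ : Chain' R l₁) (h₂ : Chain' R l₂)
    (h : ∀ x y, l₁.getLast? = some x → l₂.head? = some y → R x y) : Chain' R (l₁ ++ l₂) :=
  List.isChain_append.mpr ⟨h₁, h₂, fun x hx y hy => h x y (Option.mem_def.mp hx) (Option.mem_def.mp hy)⟩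

lemma getLast?_app_rep {α : Type*} (l : List α) (e : ℕ) (he : e ≠ 0) (x : α) :
    (l ++ replicate e x).getLast? = some x := by
  simp [List.getLast?_append, getLast?_replicate' e he]

lemma chain'_blk (e : ℕ) (he : e ≠ 0) (p : ℕ × Bool) : Chain' R (blk e p) := by
  rcases p with ⟨i, b⟩
  cases b <;>
  · refine chain'_app (chain'_app (chain'_app (chain'_replicate _ _) (chain'_replicate _ _)
      ?_) (chain'_replicate _ _) ?_) (chain'_replicate _ _) ?_ <;>
    · intro x y hx hy
      first
        | rw [getLast?_replicate' e he] at hx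
        | rw [getLast?_app_rep _ e he] at hx
      rw [head?_replicate' e he] at hy
      injection hx with hx; injection hy with hy; subst hx; subst hy
      exact Rne (by omega) _ _

lemma blk_head?_append (e : ℕ) (he : e ≠ 0) (p : ℕ × Bool) (l : List (ℕ × Bool)) :
    (blk e p ++ l).head? = some (firstL p) := by
  rcases p with ⟨i, b⟩
  cases b <;> simp [blk, firstL, List.append_assoc, head?_rep_append e he]

lemma chain'_flat (e : ℕ) (he : e ≠ 0) :
    ∀ L : List (ℕ × Bool), Chain' R L → Chain' R ((L.map (blk e)).flatten)
  | [], _ => by exact List.isChain_nil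
  | p :: L, h => by
    rw [List.map_cons, List.flatten_cons]
    refine chain'_app (chain'_blk e he p) (chain'_flat e he L h.tail) ?_
    intro x y hx hy
    rcases L with _ | ⟨q, L'⟩
    · simp at hy
    · rw [List.map_cons, List.flatten_cons, blk_head?_append e he q] at hy
      rw [blk_getLast? e he p] at hx
      injection hx with hx
      injection hy with hy
      have hRpq : R p q := (List.isChain_cons_cons.mp h).1
      subst hx; subst hy
      rcases p with ⟨i, bi⟩; rcases q with ⟨j, bj⟩
      cases bi <;> cases bj <;>
        refine Rne ?_ _ _ <;>
        (simp only [R] at hRpq; simp_all [lastL, firstL]; try omega)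

/-- The image of a word under the substitution, at the list level. -/
lemma mk_rep (a : ℕ) (b : Bool) (e : ℕ) :
    FreeGroup.mk (replicate e (a, b)) = (cond b (FreeGroup.of a) (FreeGroup.of a)⁻¹) ^ e := by
  induction e with
  | zero => simp [FreeGroup.one_eq_mk]
  | succ n ih =>
    rw [replicate_succ, show ((a,b) :: replicate n (a,b)) = [(a,b)] ++ replicate n (a,b) from rfl,
      ← FreeGroup.mul_mk, ih, pow_succ']
    congr 1
    cases b
    · show FreeGroup.mk [(a, false)] = (FreeGroup.mk [(a, true)])⁻¹
      rw [FreeGroup.inv_mk]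
      rfl
    · rfl

def csub (e : ℕ) (i : ℕ) : FreeGroup ℕ := ⁅(FreeGroup.of (2*i))^e, (FreeGroup.of (2*i+1))^e⁆

lemma mk_blk (e : ℕ) (p : ℕ × Bool) :
    FreeGroup.mk (blk e p) = cond p.2 (csub e p.1) (csub e p.1)⁻¹ := by
  rcases p with ⟨i, b⟩
  cases b <;>
    (simp only [blk, ← FreeGroup.mul_mk, mk_rep, csub, commutatorElement_inv,
      commutatorElement_def, cond, inv_pow, mul_assoc]
     all_goals simp only [mul_inv_rev, inv_inv, mul_assoc])

lemma lift_csub_mk (e : ℕ) (L : List (ℕ × Bool)) :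
    FreeGroup.lift (csub e) (FreeGroup.mk L) = FreeGroup.mk ((L.map (blk e)).flatten) := by
  induction L with
  | nil => simp [FreeGroup.one_eq_mk.symm]
  | cons p L ih =>
    rw [show (p :: L) = [p] ++ L from rfl, ← FreeGroup.mul_mk, map_mul, ih,
      List.map_append, List.flatten_append, ← FreeGroup.mul_mk]
    congr 1
    simp only [List.map_cons, List.map_nil, List.flatten_cons, List.flatten_nil,
      List.append_nil]
    rcases p with ⟨i, b⟩
    rw [mk_blk e (i, b)]
    cases b
    · have h1 : FreeGroup.mk [(i, false)] = (FreeGroup.of i)⁻¹ := by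
        rw [show [(i, false)] = replicate 1 (i, false) from rfl, mk_rep]; simp
      rw [h1, map_inv, FreeGroup.lift_apply_of]
      rfl
    · show FreeGroup.lift (csub e) (FreeGroup.of i) = _
      rw [FreeGroup.lift_apply_of]
      rfl

theorem lift_csub_ne_one (e : ℕ) (he : e ≠ 0) (w : FreeGroup ℕ) (hw : w ≠ 1) :
    FreeGroup.lift (csub e) w ≠ 1 := by
  have h1 : FreeGroup.lift (csub e) w
      = FreeGroup.mk ((w.toWord.map (blk e)).flatten) := by
    conv_lhs => rw [← FreeGroup.mk_toWord (x := w)]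
    exact lift_csub_mk e w.toWord
  have hchain : Chain' R w.toWord := by
    have := chain'_reduce w.toWord
    rwa [FreeGroup.reduce_toWord] at this
  have hred : FreeGroup.reduce ((w.toWord.map (blk e)).flatten)
      = (w.toWord.map (blk e)).flatten :=
    reduce_eq_self_of_chain' (chain'_flat e he _ hchain)
  intro hcon
  rw [h1] at hcon
  have : ((w.toWord.map (blk e)).flatten) = [] := by
    have := congrArg FreeGroup.toWord hcon
    rwa [FreeGroup.toWord_mk, hred, FreeGroup.toWord_one] at this
  rcases hL : w.toWord with _ | ⟨p, L⟩
  · exact hw (FreeGroup.toWord_eq_nil_iff.mp hL)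
  · rw [hL, List.map_cons, List.flatten_cons] at this
    have hh : (blk e p ++ (L.map (blk e)).flatten).head? = some (firstL p) :=
      blk_head?_append e he p _
    rw [this] at hh
    exact absurd hh (by simp)

end LawAux

section TreeAux

variable {X : Type*} [DecidableEq X]

lemma mem_rist_iff {a : Equiv.Perm (Vtx X)} {v : Vtx X} :
    a ∈ rist v ↔ ∀ w : Vtx X, ¬ v <+: w → a w = w := Iff.rfl

lemma aut_append (f : Equiv.Perm (Vtx X)) (hf : IsTreeAut f) (v t : Vtx X) :
    ∃ s : Vtx X, s.length = t.length ∧ f (v ++ t) = f v ++ s := by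
  induction t using List.reverseRecOn with
  | nil => exact ⟨[], rfl, by simp⟩
  | append_singleton t x ih =>
    obtain ⟨s, hs, he⟩ := ih
    obtain ⟨y, hy⟩ := hf.2 (v ++ t) x
    refine ⟨s ++ [y], by simp [hs], ?_⟩
    rw [← List.append_assoc, hy, he, List.append_assoc]

lemma aut_length (f : Equiv.Perm (Vtx X)) (hf : IsTreeAut f) (t : Vtx X) :
    (f t).length = t.length := by
  obtain ⟨s, hs, he⟩ := aut_append f hf [] t
  simp only [List.nil_append] at he
  rw [he, hf.1]
  simpa using hs

lemma aut_prefix (f : Equiv.Perm (Vtx X)) (hf : IsTreeAut f) {v t : Vtx X} (h : v <+: t) :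
    f v <+: f t := by
  obtain ⟨r, rfl⟩ := h
  obtain ⟨s, -, he⟩ := aut_append f hf v r
  rw [he]
  exact List.prefix_append _ _

lemma rist_apply_prefix {a : Equiv.Perm (Vtx X)} {v : Vtx X} (ha : a ∈ rist v) {t : Vtx X}
    (h : v <+: t) : v <+: a t := by
  by_contra hc
  have h2 : a⁻¹ (a t) = a t := (mem_rist_iff.mp ((rist v).inv_mem ha)) (a t) hc
  rw [← Equiv.Perm.mul_apply, inv_mul_cancel, Equiv.Perm.one_apply] at h2
  exact hc (h2 ▸ h)

lemma same_len_prefix_eq {v w t : Vtx X} (hl : v.length = w.length) (hv : v <+: t)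
    (hw : w <+: t) : v = w := by
  rw [List.prefix_iff_eq_take] at hv hw
  rw [hv, hw, hl]

lemma rist_commute {v w : Vtx X} (hvw : v ≠ w) (hl : v.length = w.length)
    {a b : Equiv.Perm (Vtx X)} (ha : a ∈ rist v) (hb : b ∈ rist w) : Commute a b := by
  have key : ∀ t, a (b t) = b (a t) := by
    intro t
    by_cases hv : v <+: t
    · have hw' : ¬ w <+: t := fun hw' => hvw (same_len_prefix_eq hl hv hw')
      have hv2 : v <+: a t := rist_apply_prefix ha hv
      have hw2 : ¬ w <+: a t := fun hw2 => hvw (same_len_prefix_eq hl hv2 hw2)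
      rw [mem_rist_iff.mp hb t hw', mem_rist_iff.mp hb _ hw2]
    · by_cases hw : w <+: t
      · have hw2 : w <+: b t := rist_apply_prefix hb hw
        have hv2 : ¬ v <+: b t := fun hv2 => hvw (same_len_prefix_eq hl hv2 hw2)
        rw [mem_rist_iff.mp ha t hv, mem_rist_iff.mp ha _ hv2]
      · rw [mem_rist_iff.mp hb t hw, mem_rist_iff.mp ha t hv]
        exact (mem_rist_iff.mp hb t hw).symm
  exact Equiv.ext fun t => by
    simp only [Equiv.Perm.mul_apply]
    exact key t

lemma rist_conj {g : Equiv.Perm (Vtx X)} (hg : IsTreeAut g) (hg' : IsTreeAut g⁻¹)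
    {v : Vtx X} {b : Equiv.Perm (Vtx X)} (hb : b ∈ rist v) : g * b * g⁻¹ ∈ rist (g v) := by
  rw [mem_rist_iff]
  intro w hw
  have h1 : ¬ v <+: g⁻¹ w := by
    intro hc
    have h2 := aut_prefix g hg hc
    rw [← Equiv.Perm.mul_apply, mul_inv_cancel, Equiv.Perm.one_apply] at h2
    exact hw h2
  simp only [Equiv.Perm.mul_apply]
  rw [mem_rist_iff.mp hb _ h1, ← Equiv.Perm.mul_apply, mul_inv_cancel, Equiv.Perm.one_apply]

lemma exists_level_comm (Γ : Subgroup (Equiv.Perm (Vtx X))) (hAut : ∀ g ∈ Γ, IsTreeAut g)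
    (hLT : LevelTransitive Γ)
    (N : Subgroup (Equiv.Perm (Vtx X))) (hNG : N ≤ Γ)
    (hNnorm : ∀ g ∈ Γ, ∀ x ∈ N, g * x * g⁻¹ ∈ N) (hN : N ≠ ⊥) :
    ∃ n : ℕ, ∀ x ∈ ristLevel Γ n, ∀ y ∈ ristLevel Γ n, ⁅x, y⁆ ∈ N := by
  obtain ⟨⟨g, hgN⟩, hg1⟩ := Subgroup.ne_bot_iff_exists_ne_one.mp hN
  have hg1' : g ≠ 1 := by simpa [Subtype.ext_iff] using hg1
  have hex : ∃ u : Vtx X, g u ≠ u := by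
    by_contra hc
    push_neg at hc
    exact hg1' (Equiv.ext hc)
  obtain ⟨u, hu⟩ := hex
  refine ⟨u.length, ?_⟩
  have hmove : ∀ v : Vtx X, v.length = u.length → ∃ g' ∈ N, g' v ≠ v := by
    intro v hv
    obtain ⟨h, hhΓ, hhu⟩ := hLT u v hv.symm
    refine ⟨h * g * h⁻¹, hNnorm h hhΓ g hgN, ?_⟩
    have hinv : h⁻¹ v = u := by rw [← hhu, ← Equiv.Perm.mul_apply, inv_mul_cancel, Equiv.Perm.one_apply]
    simp only [Equiv.Perm.mul_apply, hinv]
    rw [← hhu]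
    exact fun hc => hu (h.injective hc)
  have key : ∀ v w : Vtx X, v.length = u.length → w.length = u.length →
      ∀ a ∈ ristG Γ v, ∀ b ∈ ristG Γ w, ⁅a, b⁆ ∈ N := by
    intro v w hvl hwl a ha b hb
    rw [ristG, Subgroup.mem_inf] at ha hb
    by_cases hvw : v = w
    · subst hvw
      obtain ⟨g', hg'N, hg'v⟩ := hmove v hvl
      have hg'Γ : g' ∈ Γ := hNG hg'N
      have hg'aut : IsTreeAut g' := hAut g' hg'Γ
      have hg'inv : IsTreeAut g'⁻¹ := hAut g'⁻¹ (Γ.inv_mem hg'Γ)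
      have hcr : g' * b⁻¹ * g'⁻¹ ∈ rist (g' v) := rist_conj hg'aut hg'inv ((rist v).inv_mem hb.1)
      have hlen : v.length = (g' v).length := (aut_length g' hg'aut v).symm
      have hac : Commute a (g' * b⁻¹ * g'⁻¹) :=
        rist_commute (fun hh => hg'v hh.symm) hlen ha.1 hcr
      set c := g' * b⁻¹ * g'⁻¹ with hc
      have hmN : b * c ∈ N := by
        have hbc : b * c = (b * g' * b⁻¹) * g'⁻¹ := by rw [hc]; group
        rw [hbc]
        exact N.mul_mem (hNnorm b hb.2 g' hg'N) (N.inv_mem hg'N)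
      have heq : ⁅a, b * c⁆ = ⁅a, b⁆ := by
        have hca : c * a⁻¹ = a⁻¹ * c := hac.inv_left.eq.symm
        simp only [commutatorElement_def, mul_inv_rev]
        calc a * (b * c) * a⁻¹ * (c⁻¹ * b⁻¹) = a * b * (c * a⁻¹) * c⁻¹ * b⁻¹ := by group
          _ = a * b * (a⁻¹ * c) * c⁻¹ * b⁻¹ := by rw [hca]
          _ = a * b * a⁻¹ * b⁻¹ := by group
      rw [← heq]
      have hdef : ⁅a, b * c⁆ = (a * (b * c) * a⁻¹) * (b * c)⁻¹ := by
        rw [commutatorElement_def]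
      rw [hdef]
      exact N.mul_mem (hNnorm a ha.2 _ hmN) (N.inv_mem hmN)
    · have hcomm := rist_commute hvw (hvl.trans hwl.symm) ha.1 hb.1
      have h1 : ⁅a, b⁆ = 1 := commutatorElement_eq_one_iff_commute.mpr hcomm
      rw [h1]
      exact N.one_mem
  have hsup : ristLevel Γ u.length
      = ⨆ i : {v : Vtx X | v.length = u.length}, ristG Γ i :=
    (iSup_subtype'' {v : Vtx X | v.length = u.length} (ristG Γ)).symm
  have main : ∀ x ∈ ristLevel Γ u.length,
      x ∈ Γ ∧ ∀ y ∈ ristLevel Γ u.length, ⁅x, y⁆ ∈ N := by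
    intro x hx
    rw [hsup] at hx
    refine Subgroup.iSup_induction
      (fun i : {v : Vtx X | v.length = u.length} => ristG Γ i)
      (C := fun z => z ∈ Γ ∧ ∀ y ∈ ristLevel Γ u.length, ⁅z, y⁆ ∈ N) hx ?_ ?_ ?_
    · rintro ⟨v, hv⟩ z hzv
      have hzΓ : z ∈ Γ := (Subgroup.mem_inf.mp hzv).2
      refine ⟨hzΓ, ?_⟩
      intro y hy
      rw [hsup] at hy
      have hind := Subgroup.iSup_induction
        (fun i : {v : Vtx X | v.length = u.length} => ristG Γ i)
        (C := fun t => t ∈ Γ ∧ ⁅z, t⁆ ∈ N) hy ?_ ?_ ?_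
      · exact hind.2
      · rintro ⟨w, hw⟩ t htw
        exact ⟨(Subgroup.mem_inf.mp htw).2, key v w hv hw z hzv t htw⟩
      · refine ⟨Γ.one_mem, ?_⟩
        rw [commutatorElement_one_right]
        exact N.one_mem
      · rintro y₁ y₂ ⟨h1Γ, h1⟩ ⟨h2Γ, h2⟩
        refine ⟨Γ.mul_mem h1Γ h2Γ, ?_⟩
        have hid : ⁅z, y₁ * y₂⁆ = ⁅z, y₁⁆ * (y₁ * ⁅z, y₂⁆ * y₁⁻¹) := by
          simp only [commutatorElement_def]
          group
        rw [hid]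
        exact N.mul_mem h1 (hNnorm y₁ h1Γ _ h2)
    · refine ⟨Γ.one_mem, fun y hy => ?_⟩
      rw [commutatorElement_one_left]
      exact N.one_mem
    · rintro x₁ x₂ ⟨h1Γ, h1⟩ ⟨h2Γ, h2⟩
      refine ⟨Γ.mul_mem h1Γ h2Γ, fun y hy => ?_⟩
      have hid : ⁅x₁ * x₂, y⁆ = (x₁ * ⁅x₂, y⁆ * x₁⁻¹) * ⁅x₁, y⁆ := by
        simp only [commutatorElement_def]
        group
      rw [hid]
      exact N.mul_mem (hNnorm x₁ h1Γ _ (h2 y hy)) (h1 y hy)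
  exact fun x hx y hy => (main x hx).2 y hy

end TreeAux

/-- if a non-trivial normal subgroup of a level-transitive branch
group satisfies a group law, then so does the whole group. -/
theorem law_in_normal_subgroup_implies_law
    {X : Type*} [DecidableEq X] [Fintype X]
    (Γ : Subgroup (Equiv.Perm (Vtx X))) (hAut : ∀ g ∈ Γ, IsTreeAut g)
    (hLT : LevelTransitive Γ)
    (hbr : ∀ n : ℕ, ((ristLevel Γ n).subgroupOf Γ).FiniteIndex)
    (N : Subgroup (Equiv.Perm (Vtx X))) (hNG : N ≤ Γ)
    (hNnorm : ∀ g ∈ Γ, ∀ x ∈ N, g * x * g⁻¹ ∈ N) (hN : N ≠ ⊥)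
    (hlaw : SatisfiesLaw N) :
    SatisfiesLaw Γ := by
  obtain ⟨n, hcomm⟩ := exists_level_comm Γ hAut hLT N hNG hNnorm hN
  haveI hFI : ((ristLevel Γ n).subgroupOf Γ).FiniteIndex := hbr n
  haveI : ((ristLevel Γ n).subgroupOf Γ).normalCore.FiniteIndex :=
    Subgroup.finiteIndex_normalCore _
  set e := ((ristLevel Γ n).subgroupOf Γ).normalCore.index with he
  have he0 : e ≠ 0 := Subgroup.FiniteIndex.index_ne_zero
  have hpow : ∀ γ : ↥Γ, γ ^ e ∈ ((ristLevel Γ n).subgroupOf Γ).normalCore := fun γ =>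
    Subgroup.pow_index_mem _ γ
  obtain ⟨w, hw1, hwN⟩ := hlaw
  refine ⟨FreeGroup.lift (LawAux.csub e) w, LawAux.lift_csub_ne_one e he0 w hw1, ?_⟩
  intro φ
  have hmemrist : ∀ γ : ↥Γ, ((γ ^ e : ↥Γ) : Equiv.Perm (Vtx X)) ∈ ristLevel Γ n := fun γ =>
    Subgroup.mem_subgroupOf.mp (((ristLevel Γ n).subgroupOf Γ).normalCore_le (hpow γ))
  set ν : ℕ → ↥N := fun i =>
    ⟨⁅((φ (FreeGroup.of (2 * i)) ^ e : ↥Γ) : Equiv.Perm (Vtx X)),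
      ((φ (FreeGroup.of (2 * i + 1)) ^ e : ↥Γ) : Equiv.Perm (Vtx X))⁆,
      hcomm _ (hmemrist _) _ (hmemrist _)⟩ with hν
  have hcompeq : φ.comp (FreeGroup.lift (LawAux.csub e))
      = (Subgroup.inclusion hNG).comp (FreeGroup.lift ν) := by
    apply FreeGroup.ext_hom
    intro i
    simp only [MonoidHom.comp_apply, FreeGroup.lift_apply_of, LawAux.csub]
    rw [map_commutatorElement]
    apply Subtype.ext
    simp [hν, commutatorElement_def]
  have happ : φ (FreeGroup.lift (LawAux.csub e) w)
      = (Subgroup.inclusion hNG) (FreeGroup.lift ν w) := by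
    have h2 := DFunLike.congr_fun hcompeq w
    simpa using h2
  rw [happ, hwN (FreeGroup.lift ν), map_one]
end
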